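/- Let p be a prime, U a finite word of length r and V a nonempty finite word of length s over P = {0,...,p−1}. Let (a_n)_{n≥0} be the sequence U V V V ⋯ and α = Σ_{n=0}^∞ a_n p^n ∈ ℚ_p. Then α is rational and its height satisfies H(α) ≤ p^{r+s}, where H(α) denotes the maximum of the absolute values of the numerator and denominator of α written in lowest terms over ℤ. -/

import Mathlib

/-- The naive height of a rational number: the maximum of the absolute values of
its numerator and denominator in lowest terms. -/
def ratHeight (q : ℚ) : ℕ := max q.num.natAbs q.den

private lemma ratHeight_div_le (N D : ℤ) (hD : D ≠ 0) :
    ratHeight ((N : ℚ) / (D : ℚ)) ≤ max N.natAbs D.natAbs := by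
  set q : ℚ := (N : ℚ) / (D : ℚ) with hqdef
  have hq : q = Rat.divInt N D := by rw [hqdef, Rat.divInt_eq_div]
  have hdvd : (q.den : ℤ) ∣ D := hq ▸ Rat.den_dvd N D
  have hden : q.den ≤ D.natAbs :=
    Nat.le_of_dvd (Int.natAbs_pos.mpr hD)
      (by simpa using Int.natAbs_dvd_natAbs.mpr hdvd)
  have hDQ : (D : ℚ) ≠ 0 := Int.cast_ne_zero.mpr hD
  have hqD : q * (D : ℚ) = (N : ℚ) := by rw [hqdef]; field_simp
  have hnumQ : (q.num : ℚ) * (D : ℚ) = (N : ℚ) * (q.den : ℚ) := by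
    have hd : (q.den : ℚ) ≠ 0 := by exact_mod_cast q.den_nz
    have h1 : (q.num : ℚ) = q * (q.den : ℚ) :=
      (div_eq_iff hd).mp (Rat.num_div_den q)
    rw [h1, mul_right_comm, hqD]
  have hnumZ : q.num * D = N * (q.den : ℤ) := by exact_mod_cast hnumQ
  have habs : q.num.natAbs * D.natAbs = N.natAbs * q.den := by
    have := congrArg Int.natAbs hnumZ
    simpa [Int.natAbs_mul] using this
  have hnum : q.num.natAbs ≤ N.natAbs := by
    have h1 : q.num.natAbs * D.natAbs ≤ N.natAbs * D.natAbs := by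
      rw [habs]; exact Nat.mul_le_mul_left _ hden
    exact Nat.le_of_mul_le_mul_right h1 (Int.natAbs_pos.mpr hD)
  exact max_le (le_max_of_le_left hnum) (le_max_of_le_right hden)

theorem padic_periodic_digits_rational_height_le
    (p : ℕ) [Fact p.Prime] (U V : List ℕ)
    (hU : ∀ x ∈ U, x < p) (hV : ∀ x ∈ V, x < p) (hVne : V ≠ [])
    (a : ℕ → ℕ)
    (ha : ∀ n, a n = if n < U.length then U.getD n 0
      else V.getD ((n - U.length) % V.length) 0) :
    ∃ q : ℚ, (q : ℚ_[p]) = ∑' n : ℕ, (a n : ℚ_[p]) * (p : ℚ_[p]) ^ n ∧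
      ratHeight q ≤ p ^ (U.length + V.length) := by
  have hp : 1 < p := (Fact.out : p.Prime).one_lt
  set r := U.length with hr
  set s := V.length with hsdef
  have hs : 0 < s := List.length_pos_of_ne_nil hVne
  -- digits are < p
  have hap : ∀ n, a n < p := by
    intro n
    rw [ha n]
    split_ifs with h
    · have : U.getD n 0 ∈ U := by
        rw [List.getD_eq_getElem U 0 h]; exact List.getElem_mem _
      exact hU _ this
    · have hlt : (n - r) % s < s := Nat.mod_lt _ hs
      have : V.getD ((n - r) % s) 0 ∈ V := by
        rw [List.getD_eq_getElem V 0 hlt]; exact List.getElem_mem _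
      exact hV _ this
  -- periodicity beyond r
  have hper : ∀ m j, j < s → a (r + (m * s + j)) = a (r + j) := by
    intro m j hj
    rw [ha, ha]
    have h1 : ¬ r + (m * s + j) < r := by omega
    have h2 : ¬ r + j < r := by omega
    rw [if_neg h1, if_neg h2, Nat.add_sub_cancel_left, Nat.add_sub_cancel_left]
    congr 1
    rw [Nat.add_comm, Nat.add_mul_mod_self_right]
  -- integer quantities
  set A : ℤ := ∑ n ∈ Finset.range r, (a n : ℤ) * (p : ℤ) ^ n with hA
  set B : ℤ := ∑ j ∈ Finset.range s, (a (r + j) : ℤ) * (p : ℤ) ^ j with hB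
  set D : ℤ := 1 - (p : ℤ) ^ s with hD
  set N : ℤ := A * D + (p : ℤ) ^ r * B with hN
  have hps1 : (2 : ℤ) ≤ (p : ℤ) ^ s := by
    have h2 : (2 : ℤ) ≤ (p : ℤ) := by exact_mod_cast hp
    calc (2:ℤ) ≤ (p:ℤ) := h2
    _ = (p:ℤ) ^ 1 := (pow_one _).symm
    _ ≤ (p:ℤ) ^ s := pow_le_pow_right₀ (by linarith) hs
  have hDne : D ≠ 0 := by rw [hD]; omega
  refine ⟨(N : ℚ) / (D : ℚ), ?_, ?_⟩
  · -- the analytic part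
    set f : ℕ → ℚ_[p] := fun n => (a n : ℚ_[p]) * (p : ℚ_[p]) ^ n with hf
    have hnormp : ‖(p : ℚ_[p])‖ = (p : ℝ)⁻¹ := Padic.norm_p
    have hplt : (p : ℝ)⁻¹ < 1 := by
      rw [inv_lt_one_iff₀]; right; exact_mod_cast hp
    have hnorm : ∀ n, ‖f n‖ ≤ ((p : ℝ)⁻¹) ^ n := by
      intro n
      rw [hf]
      calc ‖(a n : ℚ_[p]) * (p : ℚ_[p]) ^ n‖ = ‖(a n : ℚ_[p])‖ * ‖(p : ℚ_[p])‖ ^ n := by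
            rw [norm_mul, norm_pow]
      _ ≤ 1 * ((p : ℝ)⁻¹) ^ n := by
            rw [hnormp]
            apply mul_le_mul_of_nonneg_right _ (by positivity)
            exact_mod_cast Padic.norm_int_le_one ((a n : ℤ))
      _ = ((p : ℝ)⁻¹) ^ n := one_mul _
    have hsum : Summable f :=
      Summable.of_norm_bounded (summable_geometric_of_lt_one (by positivity) hplt) hnorm
    -- partial sums formula
    have hblock : ∀ m, ∑ i ∈ Finset.range (r + m * s), f i
        = (A : ℚ_[p]) + (p : ℚ_[p]) ^ r * (B : ℚ_[p]) *
            ∑ k ∈ Finset.range m, ((p : ℚ_[p]) ^ s) ^ k := by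
      intro m
      induction m with
      | zero => simp [hf, hA]
      | succ m ih =>
        have hlen : r + (m + 1) * s = (r + m * s) + s := by ring
        rw [hlen, Finset.sum_range_add, ih, Finset.sum_range_succ]
        have hb : ∑ j ∈ Finset.range s, f (r + m * s + j)
            = (p : ℚ_[p]) ^ r * ((p : ℚ_[p]) ^ s) ^ m * (B : ℚ_[p]) := by
          rw [hB]
          push_cast
          rw [Finset.mul_sum]
          apply Finset.sum_congr rfl
          intro j hj
          have hj' : j < s := Finset.mem_range.mp hj
          have hidx : a (r + m * s + j) = a (r + j) := by
            rw [show r + m * s + j = r + (m * s + j) from by ring]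
            exact hper m j hj'
          show (a (r + m * s + j) : ℚ_[p]) * (p : ℚ_[p]) ^ (r + m * s + j) = _
          rw [hidx, show r + m * s + j = r + s * m + j from by ring,
            pow_add, pow_add, pow_mul]
          ring
        rw [hb]; ring
    -- limits
    have hmono : Filter.Tendsto (fun m => r + m * s) Filter.atTop Filter.atTop := by
      apply Filter.tendsto_atTop_mono (fun m => ?_) Filter.tendsto_id
      calc (m : ℕ) = m * 1 := (mul_one m).symm
      _ ≤ m * s := Nat.mul_le_mul_left m hs
      _ ≤ r + m * s := Nat.le_add_left _ _
    have T1 : Filter.Tendsto (fun m => ∑ i ∈ Finset.range (r + m * s), f i)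
        Filter.atTop (nhds (∑' n, f n)) :=
      (hsum.hasSum.tendsto_sum_nat).comp hmono
    have hxnorm : ‖(p : ℚ_[p]) ^ s‖ < 1 := by
      rw [norm_pow, hnormp]
      exact pow_lt_one₀ (by positivity) hplt (by omega)
    have hgeom := (hasSum_geometric_of_norm_lt_one hxnorm).tendsto_sum_nat
    have T2 : Filter.Tendsto (fun m => ∑ i ∈ Finset.range (r + m * s), f i)
        Filter.atTop (nhds ((A : ℚ_[p]) + (p : ℚ_[p]) ^ r * (B : ℚ_[p]) *
          (1 - (p : ℚ_[p]) ^ s)⁻¹)) := by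
      simp_rw [hblock]
      exact Filter.Tendsto.const_add _ (Filter.Tendsto.const_mul _ hgeom)
    have heq : (∑' n, f n) = (A : ℚ_[p]) + (p : ℚ_[p]) ^ r * (B : ℚ_[p]) *
        (1 - (p : ℚ_[p]) ^ s)⁻¹ := tendsto_nhds_unique T1 T2
    have hDQp : ((D : ℚ_[p])) ≠ 0 := Int.cast_ne_zero.mpr hDne
    have hDcast : ((D : ℚ_[p])) = 1 - (p : ℚ_[p]) ^ s := by rw [hD]; push_cast; ring
    rw [hDcast] at hDQp
    have hNc : ((N : ℚ_[p]))
        = ((A : ℚ_[p]) + (p : ℚ_[p]) ^ r * (B : ℚ_[p]) * (1 - (p : ℚ_[p]) ^ s)⁻¹)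
          * (1 - (p : ℚ_[p]) ^ s) := by
      rw [hN, hD]
      push_cast
      field_simp
    calc (((N : ℚ) / (D : ℚ) : ℚ) : ℚ_[p])
        = ((N : ℚ_[p])) / ((D : ℚ_[p])) := by push_cast; ring
    _ = (A : ℚ_[p]) + (p : ℚ_[p]) ^ r * (B : ℚ_[p]) * (1 - (p : ℚ_[p]) ^ s)⁻¹ := by
        rw [hDcast, hNc, mul_div_cancel_right₀ _ hDQp]
    _ = ∑' n, f n := heq.symm
  · -- the height bound
    have hA0 : 0 ≤ A := Finset.sum_nonneg fun n _ => by positivity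
    have hB0 : 0 ≤ B := Finset.sum_nonneg fun n _ => by positivity
    have hgeomsum : ∀ t : ℕ, ∑ n ∈ Finset.range t, ((p : ℤ) - 1) * (p : ℤ) ^ n
        = (p : ℤ) ^ t - 1 := by
      intro t
      rw [← Finset.mul_sum, mul_comm, geom_sum_mul]
    have hdig : ∀ n, (a n : ℤ) ≤ (p : ℤ) - 1 := by
      intro n; have := hap n; omega
    have hAle : A ≤ (p : ℤ) ^ r - 1 := by
      rw [hA, ← hgeomsum r]
      exact Finset.sum_le_sum fun n _ =>
        mul_le_mul_of_nonneg_right (hdig n) (by positivity)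
    have hBle : B ≤ (p : ℤ) ^ s - 1 := by
      rw [hB, ← hgeomsum s]
      exact Finset.sum_le_sum fun n _ =>
        mul_le_mul_of_nonneg_right (hdig _) (by positivity)
    have hpr1 : (1 : ℤ) ≤ (p : ℤ) ^ r := one_le_pow₀ (by exact_mod_cast hp.le)
    have hprs : ((p : ℤ)) ^ (r + s) = (p : ℤ) ^ r * (p : ℤ) ^ s := pow_add _ _ _
    have hNabs : |N| ≤ (p : ℤ) ^ (r + s) := by
      rw [hN, hD, hprs]
      rw [abs_le]
      constructor
      · nlinarith [mul_nonneg hA0 (by linarith : (0:ℤ) ≤ (p:ℤ)^s - 1),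
          mul_le_mul_of_nonneg_right hAle (by linarith : (0:ℤ) ≤ (p:ℤ)^s - 1)]
      · nlinarith [mul_le_mul_of_nonneg_left hBle (by linarith : (0:ℤ) ≤ (p:ℤ)^r),
          mul_nonneg hA0 (by linarith : (0:ℤ) ≤ (p:ℤ)^s - 1)]
    have hDabs : |D| ≤ (p : ℤ) ^ (r + s) := by
      rw [hD, hprs, abs_le]
      constructor
      · nlinarith
      · nlinarith
    calc ratHeight ((N : ℚ) / (D : ℚ)) ≤ max N.natAbs D.natAbs :=
          ratHeight_div_le N D hDne
    _ ≤ p ^ (r + s) := by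
        apply max_le
        · have h1 : (N.natAbs : ℤ) ≤ (p : ℤ) ^ (r + s) := by
            rwa [Int.abs_eq_natAbs] at hNabs
          exact_mod_cast h1
        · have h1 : (D.natAbs : ℤ) ≤ (p : ℤ) ^ (r + s) := by
            rwa [Int.abs_eq_natAbs] at hDabs
          exact_mod_cast h1
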